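/- arXiv:1802.06427 — 3 statements merged into one kernel-verified Lean document; each statement's English description precedes it below -/
import Mathlib

section
/- For h ≥ 0 define ℋ_h = { Σ_{i≥0} a_i X^i ∈ ℚ_p[[X]] : inf_{i≥0} (ord_p(a_i) + h·ℓ(i)) > −∞ }, where ℓ(0)=0 and ℓ(i) = ⌊log_p i⌋+1 for i ≥ 1. Then ℋ_h is a ℚ_p-subspace of ℚ_p[[X]] that is closed under multiplication by elements of ℤ_p[[X]]; in particular ℋ_h is a module over ℤ_p[[X]], and ℋ_0 equals the set of power series with bounded coefficients, i.e. ℋ_0 = ℤ_p[[X]] ⊗_{ℤ_p} ℚ_p. -/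
/-!
STATEMENT 5: For `h ≥ 0` define
`ℋ_h = { Σ a_i X^i ∈ ℚ_p[[X]] : inf_i (ord_p(a_i) + h·ℓ(i)) > −∞ }`, with
`ℓ(0) = 0`, `ℓ(i) = ⌊log_p i⌋ + 1` for `i ≥ 1`.  Then `ℋ_h` is a `ℚ_p`-subspace of
`ℚ_p[[X]]` closed under multiplication by elements of `ℤ_p[[X]]` (so a module over
`ℤ_p[[X]]`), and `ℋ_0` equals the set of power series with bounded coefficients,
i.e. `ℋ_0 = ℤ_p[[X]] ⊗_{ℤ_p} ℚ_p` (every element is `p^{-n}` times an integral series).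
-/

/-- The logarithmic-order function `ℓ`. -/
def ell (p : ℕ) (i : ℕ) : ℕ := if i = 0 then 0 else Nat.log p i + 1

/-- The Amice–Vélu space `ℋ_h` of power series of logarithmic order `h`; the condition
`a_i ≠ 0 → C ≤ ord_p(a_i) + h·ℓ(i)` encodes `inf_i (ord_p(a_i) + h·ℓ(i)) > −∞` with the
convention `ord_p(0) = +∞`. -/
def Hh (p : ℕ) [Fact p.Prime] (h : ℕ) : Set (PowerSeries ℚ_[p]) :=
  {f | ∃ C : ℤ, ∀ i : ℕ, PowerSeries.coeff (R := ℚ_[p]) i f ≠ 0 →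
    C ≤ (PowerSeries.coeff (R := ℚ_[p]) i f).valuation + (h : ℤ) * (ell p i : ℤ)}

lemma ell_mono (p : ℕ) {i j : ℕ} (hij : i ≤ j) : ell p i ≤ ell p j := by
  unfold ell
  rcases Nat.eq_zero_or_pos i with hi | hi
  · simp [hi]
  · rw [if_neg (Nat.pos_iff_ne_zero.mp hi), if_neg (Nat.pos_iff_ne_zero.mp (lt_of_lt_of_le hi hij))]
    exact Nat.succ_le_succ (Nat.log_mono_right hij)

/-- Valuation lower bound for finite sums. -/
lemma val_sum_ge {p : ℕ} [Fact p.Prime] {α : Type*} (s : Finset α) (f : α → ℚ_[p]) (m : ℤ)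
    (hterm : ∀ a ∈ s, f a ≠ 0 → m ≤ (f a).valuation) (hs : (∑ a ∈ s, f a) ≠ 0) :
    m ≤ (∑ a ∈ s, f a).valuation := by
  classical
  induction s using Finset.induction_on with
  | empty => simp at hs
  | @insert a s ha ih =>
    rw [Finset.sum_insert ha] at hs ⊢
    by_cases hfa : f a = 0
    · rw [hfa, zero_add] at hs ⊢
      exact ih (fun b hb => hterm b (Finset.mem_insert_of_mem hb)) hs
    by_cases hrest : (∑ b ∈ s, f b) = 0
    · rw [hrest, add_zero]
      exact hterm a (Finset.mem_insert_self a s) hfa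
    · refine le_trans ?_ (Padic.le_valuation_add hs)
      refine le_min (hterm a (Finset.mem_insert_self a s) hfa) ?_
      exact ih (fun b hb => hterm b (Finset.mem_insert_of_mem hb)) hrest

lemma val_pow_p {p : ℕ} [Fact p.Prime] (n : ℕ) : ((p : ℚ_[p]) ^ n).valuation = n := by
  have hp : (p : ℚ_[p]) ≠ 0 := by
    exact_mod_cast Nat.cast_ne_zero.mpr (Fact.out : p.Prime).ne_zero
  induction n with
  | zero => simp [Padic.valuation_one]
  | succ n ih =>
    rw [pow_succ]
    rw [Padic.valuation_mul (pow_ne_zero n hp) hp, ih, Padic.valuation_p]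
    push_cast; ring

theorem Hh_submodule_and_H0 (p : ℕ) [Fact p.Prime] (h : ℕ) :
    (0 : PowerSeries ℚ_[p]) ∈ Hh p h ∧
    (∀ f g : PowerSeries ℚ_[p], f ∈ Hh p h → g ∈ Hh p h → f + g ∈ Hh p h) ∧
    (∀ (c : ℚ_[p]) (f : PowerSeries ℚ_[p]), f ∈ Hh p h → c • f ∈ Hh p h) ∧
    (∀ (g : PowerSeries ℤ_[p]) (f : PowerSeries ℚ_[p]), f ∈ Hh p h →
      (PowerSeries.map (PadicInt.Coe.ringHom) g) * f ∈ Hh p h) ∧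
    (Hh p 0 =
      {f | ∃ (n : ℕ) (g : PowerSeries ℤ_[p]),
        f = ((p : ℚ_[p]) ^ n)⁻¹ • PowerSeries.map (PadicInt.Coe.ringHom) g}) := by
  have hpq : (p : ℚ_[p]) ≠ 0 := by
    exact_mod_cast Nat.cast_ne_zero.mpr (Fact.out : p.Prime).ne_zero
  refine ⟨⟨0, fun i hi => by simp at hi⟩, ?_, ?_, ?_, ?_⟩
  · -- addition
    rintro f g ⟨C, hC⟩ ⟨D, hD⟩
    refine ⟨min C D, fun i hi => ?_⟩
    rw [map_add] at hi ⊢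
    by_cases hf : PowerSeries.coeff (R := ℚ_[p]) i f = 0
    · rw [hf, zero_add] at hi ⊢
      exact le_trans (min_le_right _ _) (hD i hi)
    by_cases hg : PowerSeries.coeff (R := ℚ_[p]) i g = 0
    · rw [hg, add_zero] at hi ⊢
      exact le_trans (min_le_left _ _) (hC i hi)
    · have := Padic.le_valuation_add hi
      have h1 : min C D ≤ min ((PowerSeries.coeff (R := ℚ_[p]) i f).valuation + (h : ℤ) * (ell p i : ℤ))
          ((PowerSeries.coeff (R := ℚ_[p]) i g).valuation + (h : ℤ) * (ell p i : ℤ)) :=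
        le_min (le_trans (min_le_left _ _) (hC i hf)) (le_trans (min_le_right _ _) (hD i hg))
      calc min C D ≤ _ := h1
        _ = min (PowerSeries.coeff (R := ℚ_[p]) i f).valuation
            (PowerSeries.coeff (R := ℚ_[p]) i g).valuation + (h : ℤ) * (ell p i : ℤ) := by
          rw [min_add_add_right]
        _ ≤ _ := by exact add_le_add_left this _
  · -- scalar
    rintro c f ⟨C, hC⟩
    by_cases hc : c = 0
    · exact ⟨0, fun i hi => by simp [hc] at hi⟩
    refine ⟨c.valuation + C, fun i hi => ?_⟩
    rw [PowerSeries.coeff_smul, smul_eq_mul] at hi ⊢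
    have hf : PowerSeries.coeff (R := ℚ_[p]) i f ≠ 0 := right_ne_zero_of_mul hi
    rw [Padic.valuation_mul hc hf, add_assoc]
    exact add_le_add_right (hC i hf) _
  · -- multiplication by integral power series
    rintro g f ⟨C, hC⟩
    refine ⟨C, fun i hi => ?_⟩
    rw [PowerSeries.coeff_mul] at hi ⊢
    have key : C - (h : ℤ) * (ell p i : ℤ) ≤
        (∑ x ∈ Finset.HasAntidiagonal.antidiagonal i,
          PowerSeries.coeff (R := ℚ_[p]) x.1 (PowerSeries.map PadicInt.Coe.ringHom g) *
            PowerSeries.coeff (R := ℚ_[p]) x.2 f).valuation := by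
      refine val_sum_ge _ _ _ (fun a ha hne => ?_) hi
      have hg : PowerSeries.coeff (R := ℚ_[p]) a.1 (PowerSeries.map PadicInt.Coe.ringHom g) ≠ 0 :=
        left_ne_zero_of_mul hne
      have hf : PowerSeries.coeff (R := ℚ_[p]) a.2 f ≠ 0 := right_ne_zero_of_mul hne
      rw [Padic.valuation_mul hg hf]
      have hg0 : 0 ≤ (PowerSeries.coeff (R := ℚ_[p]) a.1
          (PowerSeries.map PadicInt.Coe.ringHom g)).valuation := by
        rw [← Padic.norm_le_one_iff_val_nonneg, PowerSeries.coeff_map]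
        exact (PowerSeries.coeff (R := ℤ_[p]) a.1 g).2
      have ha2 : a.2 ≤ i := by
        have h' := Finset.HasAntidiagonal.mem_antidiagonal.mp ha; omega
      have hell : (ell p a.2 : ℤ) ≤ (ell p i : ℤ) := by exact_mod_cast ell_mono p ha2
      have := hC a.2 hf
      have hmul : (h : ℤ) * (ell p a.2 : ℤ) ≤ (h : ℤ) * (ell p i : ℤ) :=
        mul_le_mul_of_nonneg_left hell (by positivity)
      linarith
    linarith
  · -- H0 characterization
    ext f
    constructor
    · rintro ⟨C, hC⟩
      set n : ℕ := (-C).toNat with hn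
      have hnC : -(n : ℤ) ≤ C := by omega
      have hnorm : ∀ i : ℕ, ‖(p : ℚ_[p]) ^ n * PowerSeries.coeff (R := ℚ_[p]) i f‖ ≤ 1 := by
        intro i
        by_cases hfi : PowerSeries.coeff (R := ℚ_[p]) i f = 0
        · simp [hfi]
        · rw [Padic.norm_le_one_iff_val_nonneg,
            Padic.valuation_mul (pow_ne_zero n hpq) hfi, val_pow_p]
          have := hC i hfi
          simp only [Nat.cast_zero, zero_mul, add_zero] at this
          linarith
      refine ⟨n, PowerSeries.mk (R := ℤ_[p]) fun i => Subtype.mk ((p : ℚ_[p]) ^ n * PowerSeries.coeff (R := ℚ_[p]) i f)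
        (hnorm i), ?_⟩
      ext i
      rw [PowerSeries.coeff_smul, PowerSeries.coeff_map]
      erw [PowerSeries.coeff_mk]
      rw [smul_eq_mul]
      show PowerSeries.coeff (R := ℚ_[p]) i f =
        ((p : ℚ_[p]) ^ n)⁻¹ * ((p : ℚ_[p]) ^ n * PowerSeries.coeff (R := ℚ_[p]) i f)
      rw [← mul_assoc, inv_mul_cancel₀ (pow_ne_zero n hpq), one_mul]
    · rintro ⟨n, g, rfl⟩
      refine ⟨-(n : ℤ), fun i hi => ?_⟩
      rw [PowerSeries.coeff_smul, smul_eq_mul] at hi ⊢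
      have hg : PowerSeries.coeff (R := ℚ_[p]) i (PowerSeries.map PadicInt.Coe.ringHom g) ≠ 0 :=
        right_ne_zero_of_mul hi
      have hg0 : 0 ≤ (PowerSeries.coeff (R := ℚ_[p]) i
          (PowerSeries.map PadicInt.Coe.ringHom g)).valuation := by
        rw [← Padic.norm_le_one_iff_val_nonneg, PowerSeries.coeff_map]
        exact (PowerSeries.coeff (R := ℤ_[p]) i g).2
      have hinv : (((p : ℚ_[p]) ^ n)⁻¹).valuation = -(n : ℤ) := by
        have h1 : ((p : ℚ_[p]) ^ n)⁻¹ * (p : ℚ_[p]) ^ n = 1 :=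
          inv_mul_cancel₀ (pow_ne_zero n hpq)
        have := Padic.valuation_mul (x := ((p : ℚ_[p]) ^ n)⁻¹) (y := (p : ℚ_[p]) ^ n)
          (inv_ne_zero (pow_ne_zero n hpq)) (pow_ne_zero n hpq)
        rw [h1, Padic.valuation_one, val_pow_p] at this
        linarith
      rw [Padic.valuation_mul (inv_ne_zero (pow_ne_zero n hpq)) hg, hinv]
      simp only [Nat.cast_zero, zero_mul, add_zero]
      linarith
end

section
/- Let Λ = ℤ_p[[X]] and let M be a finitely generated Λ-module. If M/(p, X)M is finite (automatic) and there exist infinitely many pairwise coprime height-one prime elements f_n ∈ Λ such that M/f_n M is a finitely generated ℤ_p-module of bounded rank r for all n, then M is a torsion Λ-module or has Λ-rank at most r; in particular if M/f_n M is finite for infinitely many pairwise coprime f_n, then M is Λ-torsion. -/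
set_option synthInstance.maxHeartbeats 1000000
set_option maxHeartbeats 4000000

/-!
STATEMENT 16: Let `Λ = ℤ_p[[X]]` and `M` a finitely generated `Λ`-module.  If there
are infinitely many pairwise coprime (i.e. pairwise non-associated) height-one prime
elements `f_n ∈ Λ` such that each `M/f_n M` is a finitely generated `ℤ_p`-module of
rank at most `r`, then `M` is `Λ`-torsion or has `Λ`-rank at most `r`; in particular
if `M/f_n M` is finite for infinitely many pairwise coprime `f_n`, then `M` is
`Λ`-torsion.
-/

section Auxiliary

open TensorProduct in
theorem lemA {R : Type*} [CommRing R] [IsDomain R]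
    (M : Type*) [AddCommGroup M] [Module R M] [Module.Finite R M] :
    ∃ (g : ℕ) (c : R) (w : Fin g → M), c ≠ 0 ∧
      Module.rank (FractionRing R) (FractionRing R ⊗[R] M) = g ∧
      LinearIndependent R w ∧
      ∀ x : M, c • x ∈ Submodule.span R (Set.range w) := by
  classical
  set K := FractionRing R
  set φ : M →ₗ[R] K ⊗[R] M := TensorProduct.mk R K M 1 with hφ
  have : IsLocalizedModule (nonZeroDivisors R) φ :=
    (isLocalizedModule_iff_isBaseChange (nonZeroDivisors R) K φ).mpr
      (TensorProduct.isBaseChange R M K)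
  have hFin : Module.Finite K (K ⊗[R] M) := inferInstance
  set g := Module.finrank K (K ⊗[R] M) with hg
  obtain ⟨b⟩ : Nonempty (Module.Basis (Fin g) K (K ⊗[R] M)) := ⟨Module.finBasis K (K ⊗[R] M)⟩
  choose sec hsec using IsLocalizedModule.surj (nonZeroDivisors R) φ
  set w : Fin g → M := fun i => (sec (b i)).1 with hw
  have hwli : LinearIndependent R w := by
    rw [linearIndependent_iff']
    intro t a ha i hit
    have hb := b.linearIndependent
    rw [linearIndependent_iff'] at hb
    refine (mul_eq_zero.mp ?_).resolve_right (nonZeroDivisors.ne_zero (sec (b i)).2.prop)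
    apply IsFractionRing.injective R K
    rw [map_zero]
    refine hb t (fun j => algebraMap R K (a j * (sec (b j)).2)) ?_ _ hit
    simp only [map_mul, mul_smul, algebraMap_smul, ← Submonoid.smul_def,
      hsec, ← map_smul, ← map_sum, ha, map_zero]
    exact (congrArg φ ha).trans (map_zero φ)
  have hspan : ∀ y : K ⊗[R] M, y ∈ Submodule.span K (Set.range (φ ∘ w)) := by
    intro y
    have hbmem : ∀ i, b i ∈ Submodule.span K (Set.range (φ ∘ w)) := by
      intro i
      obtain ⟨u, hu⟩ : IsUnit (algebraMap R K ((sec (b i)).2 : R)) :=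
        IsLocalization.map_units K (sec (b i)).2
      have h1 : φ (w i) = u • b i := by
        rw [Units.smul_def, hu, ← hsec (b i)]
        simp [Submonoid.smul_def, algebraMap_smul]
      have h2 : b i = u⁻¹ • φ (w i) := by rw [h1, inv_smul_smul]
      rw [h2]
      exact Submodule.smul_mem _ _ (Submodule.subset_span ⟨i, rfl⟩)
    have htop : Submodule.span K (Set.range b) ≤ Submodule.span K (Set.range (φ ∘ w)) := by
      rw [Submodule.span_le]; rintro _ ⟨i, rfl⟩; exact hbmem i
    rw [b.span_eq] at htop
    exact htop Submodule.mem_top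
  have hx : ∀ x : M, ∃ s : R, s ≠ 0 ∧ s • x ∈ Submodule.span R (Set.range w) := by
    intro x
    obtain ⟨k, hk⟩ := (Submodule.mem_span_range_iff_exists_fun K).mp (hspan (φ x))
    obtain ⟨d, hd⟩ := IsLocalization.exist_integer_multiples (nonZeroDivisors R) Finset.univ k
    set a : Fin g → R := fun i => (hd i (Finset.mem_univ i)).choose with ha
    have haspec : ∀ i, algebraMap R K (a i) = (d : R) • k i :=
      fun i => (hd i (Finset.mem_univ i)).choose_spec
    have hk' : ∑ i, k i • φ (w i) = φ x := by
      rw [← hk]; rfl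
    have key : φ ((d : R) • x - ∑ i, a i • w i) = φ 0 := by
      rw [map_zero, map_sub, map_smul, map_sum, sub_eq_zero]
      have h2 : ∀ i ∈ Finset.univ, φ (a i • w i) = (d : R) • (k i • φ (w i)) := by
        intro i _
        rw [map_smul, ← algebraMap_smul K (a i), haspec i, smul_assoc]
      rw [Finset.sum_congr rfl h2, ← Finset.smul_sum, hk']
    obtain ⟨t, ht⟩ := IsLocalizedModule.exists_of_eq (S := nonZeroDivisors R) (f := φ) key
    refine ⟨(t : R) * (d : R), mul_ne_zero (nonZeroDivisors.ne_zero t.prop)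
      (nonZeroDivisors.ne_zero d.prop), ?_⟩
    have ht' : (t : R) • ((d : R) • x) = (t : R) • ∑ i, a i • w i := by
      have h := ht
      rw [smul_zero, Submonoid.smul_def, smul_sub, sub_eq_zero] at h
      exact h
    rw [mul_smul, ht']
    exact Submodule.smul_mem _ _ (Submodule.sum_mem _ fun i _ =>
      Submodule.smul_mem _ _ (Submodule.subset_span ⟨i, rfl⟩))
  obtain ⟨T, hT⟩ := Module.Finite.fg_top (R := R) (M := M)
  set c : R := ∏ t ∈ T, (hx t).choose with hc
  refine ⟨g, c, w, ?_, (Module.finrank_eq_rank K _).symm, hwli, ?_⟩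
  · rw [hc]
    exact Finset.prod_ne_zero_iff.mpr fun t _ => (hx t).choose_spec.1
  · intro x
    have hxT : x ∈ Submodule.span R (T : Set M) := by rw [hT]; trivial
    refine Submodule.span_induction ?_ ?_ ?_ ?_ hxT
    · intro y hy
      have : c = (∏ t ∈ T.erase y, (hx t).choose) * (hx y).choose :=
        (Finset.prod_erase_mul T _ hy).symm
      rw [this, mul_smul]
      exact Submodule.smul_mem _ _ (hx y).choose_spec.2
    · simp
    · intro y z _ _ hy hz
      rw [smul_add]; exact Submodule.add_mem _ hy hz
    · intro r y _ hy
      rw [smul_comm]; exact Submodule.smul_mem _ _ hy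

theorem lemB {R : Type*} [CommRing R] [IsDomain R] {M : Type*} [AddCommGroup M] [Module R M]
    {g : ℕ} {c f₀ : R} {w : Fin g → M} (hwli : LinearIndependent R w)
    (hcw : ∀ x : M, c • x ∈ Submodule.span R (Set.range w))
    (hp : Prime f₀) (hnd : ¬ f₀ ∣ c)
    {x : Fin g → R} (hx : (∑ i, x i • w i) ∈ Ideal.span {f₀} • (⊤ : Submodule R M)) :
    ∀ i, f₀ ∣ x i := by
  rw [Submodule.ideal_span_singleton_smul] at hx
  rw [← SetLike.mem_coe, Submodule.coe_pointwise_smul] at hx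
  obtain ⟨m, -, hm⟩ := hx
  obtain ⟨y, hy⟩ := (Submodule.mem_span_range_iff_exists_fun R).mp (hcw m)
  have key : ∑ i, (c * x i) • w i = ∑ i, (f₀ * y i) • w i := by
    calc ∑ i, (c * x i) • w i = c • ∑ i, x i • w i := by
          rw [Finset.smul_sum]; exact Finset.sum_congr rfl fun i _ => (mul_smul c (x i) (w i))
      _ = c • (f₀ • m) := by rw [← hm]
      _ = f₀ • (c • m) := smul_comm _ _ _
      _ = f₀ • ∑ i, y i • w i := by rw [hy]
      _ = ∑ i, (f₀ * y i) • w i := by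
          rw [Finset.smul_sum]; exact Finset.sum_congr rfl fun i _ => (mul_smul f₀ (y i) (w i)).symm
  have hz : ∑ i, ((c * x i) - (f₀ * y i)) • w i = 0 := by
    simp_rw [sub_smul]
    rw [Finset.sum_sub_distrib, key, sub_self]
  have := linearIndependent_iff'.mp hwli Finset.univ _ hz
  intro i
  have hi := this i (Finset.mem_univ i)
  rw [sub_eq_zero] at hi
  exact (hp.dvd_or_dvd ⟨y i, hi⟩).resolve_left hnd

open PowerSeries

theorem prodPrimesDvd {α : Type*} [CommMonoidWithZero α] [IsCancelMulZero α] {ι : Type*}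
    (S : Finset ι) (f : ι → α) (hp : ∀ n ∈ S, Prime (f n))
    (hassoc : ∀ m ∈ S, ∀ n ∈ S, m ≠ n → ¬ Associated (f m) (f n))
    {c : α} (hd : ∀ n ∈ S, f n ∣ c) : (∏ n ∈ S, f n) ∣ c := by
  classical
  induction S using Finset.cons_induction generalizing c with
  | empty => simp
  | cons a S ha IH =>
    obtain ⟨k, rfl⟩ := hd a (Finset.mem_cons_self a S)
    rw [Finset.prod_cons]
    apply mul_dvd_mul_left
    refine IH (fun n hn => hp n (Finset.mem_cons_of_mem hn))
      (fun m hm n hn hmn => hassoc m (Finset.mem_cons_of_mem hm) n (Finset.mem_cons_of_mem hn) hmn)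
      (fun n hn => ?_)
    have hdvd := hd n (Finset.mem_cons_of_mem hn)
    have hnp := hp n (Finset.mem_cons_of_mem hn)
    refine (hnp.dvd_or_dvd hdvd).resolve_left fun hna => ?_
    have : Associated (f n) (f a) :=
      hnp.associated_of_dvd (hp a (Finset.mem_cons_self a S)) hna
    exact hassoc n (Finset.mem_cons_of_mem hn) a (Finset.mem_cons_self a S)
      (by rintro rfl; exact ha hn) this

variable (p : ℕ) [Fact p.Prime]

/-- the ideal (p, X) -/
noncomputable def Jpx : Ideal (PowerSeries ℤ_[p]) :=
  Ideal.span {PowerSeries.C (R := ℤ_[p]) (p : ℤ_[p]), PowerSeries.X}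

theorem mem_Jpx_of_not_isUnit {g : PowerSeries ℤ_[p]} (hg : ¬ IsUnit g) : g ∈ Jpx p := by
  have h1 : ¬ IsUnit (constantCoeff (R := ℤ_[p]) g) := fun h => hg (isUnit_iff_constantCoeff.mpr h)
  have h2 : (p : ℤ_[p]) ∣ constantCoeff (R := ℤ_[p]) g := by
    have : constantCoeff (R := ℤ_[p]) g ∈ IsLocalRing.maximalIdeal ℤ_[p] := h1
    rwa [PadicInt.maximalIdeal_eq_span_p, Ideal.mem_span_singleton] at this
  obtain ⟨d, hd⟩ := h2
  have hX : g - PowerSeries.C (R := ℤ_[p]) (constantCoeff (R := ℤ_[p]) g) ∈ Ideal.span {(X : PowerSeries ℤ_[p])} := by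
    rw [Ideal.mem_span_singleton]
    rw [X_dvd_iff]
    simp
  have hC : PowerSeries.C (R := ℤ_[p]) (constantCoeff (R := ℤ_[p]) g)
      ∈ Ideal.span {PowerSeries.C (R := ℤ_[p]) (p : ℤ_[p])} := by
    rw [Ideal.mem_span_singleton, hd, map_mul]
    exact Dvd.intro _ rfl
  have := Ideal.add_mem (Jpx p)
    (Ideal.span_mono (by simp) hC)
    (Ideal.span_mono (by simp) hX)
  simpa using this

theorem coeff_dvd_of_mem_Jpx_pow :
    ∀ (k : ℕ) (g : PowerSeries ℤ_[p]), g ∈ (Jpx p) ^ k →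
      ∀ j, (p : ℤ_[p]) ^ (k - j) ∣ PowerSeries.coeff (R := ℤ_[p]) j g := by
  intro k
  induction k with
  | zero => intro g _ j; simpa using dvd_refl _
  | succ k IH =>
    intro g hg j
    rw [pow_succ] at hg
    induction hg using Submodule.mul_induction_on' with
    | mem_mul_mem m hm n hn =>
      obtain ⟨a, b, hab⟩ := Ideal.mem_span_pair.mp hn
      have : m * n = (a * m) * PowerSeries.C (R := ℤ_[p]) (p : ℤ_[p]) + (b * m) * X := by
        rw [← hab]; ring
      rw [this, map_add]
      apply dvd_add
      · rw [coeff_mul_C]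
        have := IH (a * m) (Ideal.mul_mem_left _ a hm) j
        calc (p : ℤ_[p]) ^ (k + 1 - j) ∣ (p : ℤ_[p]) ^ ((k - j) + 1) :=
              pow_dvd_pow _ (by omega)
          _ ∣ PowerSeries.coeff (R := ℤ_[p]) j (a * m) * (p:ℤ_[p]) := by
              rw [pow_succ]
              exact mul_dvd_mul this dvd_rfl
      · cases j with
        | zero =>
          have : PowerSeries.coeff (R := ℤ_[p]) 0 ((b * m) * X) = 0 := by
            rw [coeff_zero_eq_constantCoeff, map_mul]
            simp
          rw [this]
          exact dvd_zero _
        | succ j' =>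
          rw [coeff_succ_mul_X]
          exact (pow_dvd_pow _ (by omega)).trans (IH (b * m) (Ideal.mul_mem_left _ b hm) j')
    | add x hx y hy ihx ihy =>
      rw [map_add]
      exact dvd_add ihx ihy

theorem padic_eq_zero_of_forall_pow_dvd (x : ℤ_[p]) (h : ∀ k, (p : ℤ_[p]) ^ k ∣ x) : x = 0 := by
  have haus : IsHausdorff (IsLocalRing.maximalIdeal ℤ_[p]) ℤ_[p] := inferInstance
  refine haus.haus' x fun n => ?_
  rw [SModEq.zero]
  have : x ∈ (IsLocalRing.maximalIdeal ℤ_[p]) ^ n := by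
    rw [PadicInt.maximalIdeal_eq_span_p, Ideal.span_singleton_pow, Ideal.mem_span_singleton]
    exact h n
  simpa [smul_eq_mul, Ideal.mul_top] using this

theorem finite_bad_set (f : ℕ → PowerSeries ℤ_[p])
    (hprime : ∀ n, Prime (f n))
    (hcoprime : ∀ m n, m ≠ n → Ideal.span {f m} ≠ Ideal.span {f n})
    {c : PowerSeries ℤ_[p]} (hc : c ≠ 0) : {n : ℕ | f n ∣ c}.Finite := by
  by_contra hinf
  rw [← Set.not_infinite, not_not] at hinf
  apply hc
  ext j
  rw [map_zero]
  apply padic_eq_zero_of_forall_pow_dvd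
  intro k
  obtain ⟨S, hSsub, hScard⟩ := hinf.exists_subset_card_eq (k + j)
  have hprod : (∏ n ∈ S, f n) ∣ c := by
    refine prodPrimesDvd S f (fun n _ => hprime n) (fun m _ n _ hmn hass => ?_)
      (fun n hn => hSsub hn)
    exact hcoprime m n hmn (Ideal.span_singleton_eq_span_singleton.mpr hass)
  have hmem : (∏ n ∈ S, f n) ∈ (Jpx p) ^ (k + j) := by
    rw [← hScard]
    clear hScard hSsub hprod
    induction S using Finset.cons_induction with
    | empty => simp
    | cons a S ha IH =>
      rw [Finset.prod_cons, Finset.card_cons, pow_succ, mul_comm ((Jpx p) ^ S.card)]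
      exact Ideal.mul_mem_mul (mem_Jpx_of_not_isUnit p (hprime a).not_unit) IH
  obtain ⟨d, rfl⟩ := hprod
  have : (∏ n ∈ S, f n) * d ∈ (Jpx p) ^ (k + j) := Ideal.mul_mem_right d _ hmem
  have hdvd := coeff_dvd_of_mem_Jpx_pow p (k + j) _ this j
  simpa [Nat.add_sub_cancel] using hdvd

end Auxiliary

theorem specialization_controls_rank
    (p : ℕ) [Fact p.Prime]
    (M : Type*) [AddCommGroup M] [Module (PowerSeries ℤ_[p]) M]
    [Module.Finite (PowerSeries ℤ_[p]) M]
    (r : ℕ) (f : ℕ → PowerSeries ℤ_[p])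
    (hprime : ∀ n, Prime (f n))
    (hcoprime : ∀ m n, m ≠ n → Ideal.span {f m} ≠ Ideal.span {f n})
    (hfg : ∀ n, Module.Finite ℤ_[p]
      (RestrictScalars ℤ_[p] (PowerSeries ℤ_[p])
        (M ⧸ (Ideal.span {f n} • (⊤ : Submodule (PowerSeries ℤ_[p]) M)))))
    (hrank : ∀ n, Module.rank ℤ_[p]
      (RestrictScalars ℤ_[p] (PowerSeries ℤ_[p])
        (M ⧸ (Ideal.span {f n} • (⊤ : Submodule (PowerSeries ℤ_[p]) M)))) ≤ r) :
    (Module.IsTorsion (PowerSeries ℤ_[p]) M ∨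
      Module.rank (FractionRing (PowerSeries ℤ_[p]))
        (TensorProduct (PowerSeries ℤ_[p]) (FractionRing (PowerSeries ℤ_[p])) M) ≤ r) ∧
    ((∀ n, Finite
        (M ⧸ (Ideal.span {f n} • (⊤ : Submodule (PowerSeries ℤ_[p]) M)))) →
      Module.IsTorsion (PowerSeries ℤ_[p]) M) := by
  classical
  obtain ⟨g, c, w, hc0, hrk, hwli, hcw⟩ := lemA (R := PowerSeries ℤ_[p]) M
  have hCp : (PowerSeries.C (R := ℤ_[p])) (p : ℤ_[p]) ≠ 0 := by
    intro h
    have := congrArg (PowerSeries.constantCoeff (R := ℤ_[p])) h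
    rw [PowerSeries.constantCoeff_C, map_zero] at this
    exact (Nat.cast_ne_zero.mpr (Fact.out (p := p.Prime)).ne_zero) this
  have hc'0 : c * (PowerSeries.C (R := ℤ_[p])) (p : ℤ_[p]) ≠ 0 := mul_ne_zero hc0 hCp
  obtain ⟨n₀, hn₀⟩ :=
    (Set.Finite.infinite_compl (finite_bad_set p f hprime hcoprime hc'0)).nonempty
  have hbad : ¬ f n₀ ∣ c * (PowerSeries.C (R := ℤ_[p])) (p : ℤ_[p]) := hn₀
  have hndc : ¬ f n₀ ∣ c := fun h => hbad (h.mul_right _)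
  have hndp : ¬ f n₀ ∣ (PowerSeries.C (R := ℤ_[p])) (p : ℤ_[p]) := fun h => hbad (h.mul_left _)
  set Sm : Submodule (PowerSeries ℤ_[p]) M := Ideal.span {f n₀} • ⊤ with hSm
  set e := RestrictScalars.addEquiv ℤ_[p] (PowerSeries ℤ_[p]) (M ⧸ Sm) with he
  -- the key linearly independent family
  have hli : LinearIndependent ℤ_[p]
      (fun i : Fin g => e.symm (Sm.mkQ (w i))) := by
    refine (@linearIndependent_iff' _ _ _ _ _
      (RestrictScalars.module ℤ_[p] (PowerSeries ℤ_[p]) (M ⧸ Sm)) _).mpr ?_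
    intro t a ha i hit
    -- translate the relation to M
    have ha2 : Sm.mkQ (∑ j ∈ t, (algebraMap ℤ_[p] (PowerSeries ℤ_[p]) (a j)) • w j) = 0 := by
      have hee := congrArg e ha
      rw [map_sum, map_zero] at hee
      rw [map_sum, ← hee]
      refine Finset.sum_congr rfl fun j hj => ?_
      rw [map_smul, RestrictScalars.addEquiv_map_smul, AddEquiv.apply_symm_apply]
    set x : Fin g → PowerSeries ℤ_[p] :=
      fun j => if j ∈ t then algebraMap ℤ_[p] (PowerSeries ℤ_[p]) (a j) else 0 with hx
    have hmem : (∑ j, x j • w j) ∈ Sm := by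
      have hsum : (∑ j, x j • w j) = ∑ j ∈ t, (algebraMap ℤ_[p] (PowerSeries ℤ_[p]) (a j)) • w j := by
        rw [← Finset.sum_subset (Finset.subset_univ t) (fun j _ hj => by rw [hx]; simp [hj])]
        refine Finset.sum_congr rfl fun j hj => ?_
        rw [hx]; simp [hj]
      have := ha2
      rw [Submodule.mkQ_apply, Submodule.Quotient.mk_eq_zero] at this
      rwa [hsum]
    have hdvd := lemB hwli hcw (hprime n₀) hndc hmem i
    rw [hx] at hdvd
    simp only [hit, if_pos] at hdvd
    -- conclude a i = 0
    by_contra hai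
    obtain ⟨k, hk⟩ : ∃ k : ℕ, a i ∣ (p : ℤ_[p]) ^ k := by
      obtain ⟨v, u, hvu⟩ : ∃ (v : ℕ) (u : ℤ_[p]ˣ), a i = (u : ℤ_[p]) * (p : ℤ_[p]) ^ v :=
        ⟨PadicInt.valuation (a i), PadicInt.unitCoeff hai, PadicInt.unitCoeff_spec hai⟩
      refine ⟨v, ((u⁻¹ : ℤ_[p]ˣ) : ℤ_[p]), ?_⟩
      rw [hvu, mul_right_comm]
      simp
    have : f n₀ ∣ (PowerSeries.C (R := ℤ_[p])) ((p : ℤ_[p]) ^ k) :=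
      hdvd.trans (map_dvd _ hk)
    rw [map_pow] at this
    exact hndp ((hprime n₀).dvd_of_dvd_pow this)
  -- the rank bound
  have key : ∀ s : ℕ,
      Module.rank ℤ_[p] (RestrictScalars ℤ_[p] (PowerSeries ℤ_[p]) (M ⧸ Sm)) ≤ s → g ≤ s := by
    intro s hs
    have h1 := hli.cardinal_lift_le_rank
    rw [Cardinal.mk_fin, Cardinal.lift_natCast] at h1
    have h2 := h1.trans (Cardinal.lift_le.mpr hs)
    rw [Cardinal.lift_natCast] at h2
    exact_mod_cast h2
  constructor
  · right
    rw [hrk]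
    exact_mod_cast Nat.cast_le.mpr (key r (hrank n₀))
  · intro hfin
    have hfin₀ : Finite (M ⧸ Sm) := hfin n₀
    have hr0 : Module.rank ℤ_[p] (RestrictScalars ℤ_[p] (PowerSeries ℤ_[p]) (M ⧸ Sm)) = 0 := by
      refine (@rank_eq_zero_iff ℤ_[p] _ _ _
        (RestrictScalars.module ℤ_[p] (PowerSeries ℤ_[p]) (M ⧸ Sm))).mpr ?_
      intro x
      have hQfin : Finite (M ⧸ Sm) := hfin₀
      have hpos : 0 < Nat.card (M ⧸ Sm) := Nat.card_pos
      refine ⟨(Nat.card (M ⧸ Sm) : ℤ_[p]), ?_, ?_⟩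
      · exact_mod_cast Nat.cast_ne_zero.mpr hpos.ne'
      · have h0 : (Nat.card (M ⧸ Sm)) • (e x) = 0 := by
          have : Fintype (M ⧸ Sm) := Fintype.ofFinite _
          simpa [Nat.card_eq_fintype_card] using card_nsmul_eq_zero (G := M ⧸ Sm) (x := e x)
        have h1 : (Nat.card (M ⧸ Sm)) • x = 0 := by
          apply e.injective
          rw [map_nsmul, map_zero, h0]
        rw [Nat.cast_smul_eq_nsmul, h1]
    have hg0 : g = 0 := Nat.le_zero.mp (key 0 (by rw [hr0, Nat.cast_zero]))
    -- M is torsion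
    have hrkM : Module.rank (PowerSeries ℤ_[p]) M = 0 := by
      set K := FractionRing (PowerSeries ℤ_[p])
      set φ : M →ₗ[PowerSeries ℤ_[p]] TensorProduct (PowerSeries ℤ_[p]) K M :=
        TensorProduct.mk (PowerSeries ℤ_[p]) K M 1 with hφ
      have : IsLocalizedModule (nonZeroDivisors (PowerSeries ℤ_[p])) φ :=
        (isLocalizedModule_iff_isBaseChange (nonZeroDivisors (PowerSeries ℤ_[p])) K φ).mpr
          (TensorProduct.isBaseChange (PowerSeries ℤ_[p]) M K)
      have := IsLocalizedModule.rank_eq (p := nonZeroDivisors (PowerSeries ℤ_[p]))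
        (f := φ) (hp := le_rfl)
      rw [← this, ← IsLocalization.rank_eq K (nonZeroDivisors (PowerSeries ℤ_[p])) le_rfl,
        hrk, hg0, Nat.cast_zero]
    exact rank_eq_zero_iff_isTorsion.mp hrkM
end

section
/- Let O be the valuation ring of a finite extension K of ℚ_p, and let f = Σ a_i X^i ∈ ℋ_h (logarithmic order h) with the property that for every n ≥ 1 and every j with l ≤ j ≤ l' (where h = l' − l), f is divisible by ω_n^{[j]}(X) = (1+X)^{p^n} − (1+p)^{jp^n} in ℋ_h. Then f = 0. -/
/-- `ω_n^{[j]} = (1+X)^{p^n} − (1+p)^{j p^n}` as a power series over `ℚ_p`,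
allowing `j ∈ ℤ`. -/
noncomputable def omegaNJ (p : ℕ) [Fact p.Prime] (n : ℕ) (j : ℤ) :
    PowerSeries ℚ_[p] :=
  (1 + PowerSeries.X) ^ (p ^ n) -
    PowerSeries.C (R := ℚ_[p]) ((1 + (p : ℚ_[p])) ^ (j * (p : ℤ) ^ n))

open PowerSeries

variable {p : ℕ} [Fact p.Prime]

namespace AV

/-- valuation→norm conversion -/
lemma norm_le_of_val {x : ℚ_[p]} {B : ℤ} (hx : x ≠ 0) (h : B ≤ x.valuation) :
    ‖x‖ ≤ (p : ℝ) ^ (-B) := by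
  rw [Padic.norm_eq_zpow_neg_valuation hx]
  have hp1 : (1 : ℝ) < (p : ℝ) := by exact_mod_cast (Fact.out : p.Prime).one_lt
  exact zpow_le_zpow_right₀ hp1.le (by omega)

lemma val_le_of_norm {x : ℚ_[p]} {B : ℤ} (hx : x ≠ 0) (h : ‖x‖ ≤ (p : ℝ) ^ (-B)) :
    B ≤ x.valuation := by
  rw [Padic.norm_eq_zpow_neg_valuation hx] at h
  have hp1 : (1 : ℝ) < (p : ℝ) := by exact_mod_cast (Fact.out : p.Prime).one_lt
  have := (zpow_le_zpow_iff_right₀ hp1).mp h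
  omega

/-- ultrametric bound for finite sums -/
lemma norm_sum_le {ι : Type*} (s : Finset ι) (g : ι → ℚ_[p]) {ε : ℝ} (hε : 0 ≤ ε)
    (h : ∀ i ∈ s, ‖g i‖ ≤ ε) : ‖∑ i ∈ s, g i‖ ≤ ε := by
  classical
  induction s using Finset.induction_on with
  | empty => simpa using hε
  | @insert a s' hx ih =>
    rw [Finset.sum_insert hx]
    refine le_trans (Padic.nonarchimedean _ _) (max_le (h a (by simp)) (ih ?_))
    exact fun i hi => h i (by simp [hi])

lemma norm_add_eq_left {x y : ℚ_[p]} (h : ‖y‖ < ‖x‖) : ‖x + y‖ = ‖x‖ := by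
  have h1 : ‖x + y‖ ≤ ‖x‖ := le_trans (Padic.nonarchimedean _ _) (by simp [le_of_lt h])
  have h2 : ‖x‖ ≤ ‖x + y‖ := by
    have : ‖x‖ ≤ max ‖x + y‖ ‖y‖ := by
      simpa using Padic.nonarchimedean (x + y) (-y)
    rcases max_cases ‖x + y‖ ‖y‖ with ⟨he, _⟩ | ⟨he, _⟩ <;> rw [he] at this
    · exact this
    · linarith
  linarith

end AV

namespace AV2
open AV

lemma exists_norm_dominates {ι : Type*} (s : Finset ι) (g : ι → ℚ_[p])
    (hs : (∑ i ∈ s, g i) ≠ 0) : ∃ j ∈ s, ‖∑ i ∈ s, g i‖ ≤ ‖g j‖ := by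
  classical
  induction s using Finset.induction_on with
  | empty => simp at hs
  | @insert a s' hx ih =>
    rw [Finset.sum_insert hx] at hs ⊢
    rcases le_max_iff.mp (Padic.nonarchimedean (g a) (∑ i ∈ s', g i)) with h | h
    · exact ⟨a, by simp, h⟩
    · by_cases h0 : (∑ i ∈ s', g i) = 0
      · refine ⟨a, by simp, ?_⟩
        rw [h0, add_zero]
      · obtain ⟨j, hj, hj2⟩ := ih h0
        exact ⟨j, by simp [hj], le_trans h hj2⟩

/-- valuation version: some term of a nonzero sum has valuation ≤ valuation of the sum -/
lemma exists_val_dominates {ι : Type*} (s : Finset ι) (g : ι → ℚ_[p])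
    (hs : (∑ i ∈ s, g i) ≠ 0) :
    ∃ j ∈ s, g j ≠ 0 ∧ (g j).valuation ≤ (∑ i ∈ s, g i).valuation := by
  obtain ⟨j, hj, hle⟩ := exists_norm_dominates s g hs
  have hgj : g j ≠ 0 := by
    intro h0
    rw [h0, norm_zero] at hle
    exact hs (norm_le_zero_iff.mp hle)
  refine ⟨j, hj, hgj, ?_⟩
  have := val_le_of_norm (B := (g j).valuation) hs (by rwa [← Padic.norm_eq_zpow_neg_valuation hgj])
  omega

end AV2

namespace AV3
open AV AV2 PowerSeries

variable (p) in
/-- weight of the `i`-th coefficient -/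
noncomputable def W (α β : ℤ) (F : PowerSeries ℚ_[p]) (i : ℕ) : ℤ :=
  α * (PowerSeries.coeff (R := ℚ_[p]) i F).valuation + β * i

variable (p) in
/-- all nonzero coefficients have weight at least `B` -/
def Bdd (α β B : ℤ) (F : PowerSeries ℚ_[p]) : Prop :=
  ∀ i, PowerSeries.coeff (R := ℚ_[p]) i F ≠ 0 → B ≤ W p α β F i

lemma bdd_mul {α β A B : ℤ} (hα : 0 ≤ α) {F G : PowerSeries ℚ_[p]}
    (hF : Bdd p α β A F) (hG : Bdd p α β B G) : Bdd p α β (A + B) (F * G) := by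
  intro i hi
  unfold W
  rw [PowerSeries.coeff_mul] at hi ⊢
  obtain ⟨⟨a, b⟩, hab, hne, hval⟩ := exists_val_dominates _ _ hi
  have hFa : PowerSeries.coeff (R := ℚ_[p]) a F ≠ 0 := fun h => hne (by simp [h])
  have hGb : PowerSeries.coeff (R := ℚ_[p]) b G ≠ 0 := fun h => hne (by simp [h])
  have hab' : a + b = i := Finset.HasAntidiagonal.mem_antidiagonal.mp hab
  have hv := Padic.valuation_mul hFa hGb
  have h1 := hF a hFa
  have h2 := hG b hGb
  unfold W at h1 h2
  have hmul : α * ((PowerSeries.coeff (R := ℚ_[p]) a F) * (PowerSeries.coeff (R := ℚ_[p]) b G)).valuation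
      ≤ α * (∑ x ∈ Finset.HasAntidiagonal.antidiagonal i, PowerSeries.coeff (R := ℚ_[p]) x.1 F
        * PowerSeries.coeff (R := ℚ_[p]) x.2 G).valuation := by
    exact mul_le_mul_of_nonneg_left hval hα
  rw [hv] at hmul
  have : (β : ℤ) * a + β * b = β * i := by
    rw [← hab']; push_cast; ring
  nlinarith [hmul]

end AV3

namespace AV4
open AV AV2 AV3 PowerSeries

lemma exists_min {α β L : ℤ} {F : PowerSeries ℚ_[p]} (hF : F ≠ 0)
    (hB : Bdd p α β L F) :
    ∃ B : ℤ, ∃ k1 : ℕ, Bdd p α β B F ∧ PowerSeries.coeff (R := ℚ_[p]) k1 F ≠ 0 ∧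
      W p α β F k1 = B ∧ ∀ k < k1, PowerSeries.coeff (R := ℚ_[p]) k F ≠ 0 → W p α β F k ≠ B := by
  classical
  have hex : ∃ i, PowerSeries.coeff (R := ℚ_[p]) i F ≠ 0 := by
    by_contra hc
    push_neg at hc
    exact hF (PowerSeries.ext fun i => by simpa using hc i)
  set P : ℤ → Prop := fun n => ∃ i, PowerSeries.coeff (R := ℚ_[p]) i F ≠ 0 ∧ W p α β F i = n with hP
  have Hbdd : ∃ b : ℤ, ∀ z : ℤ, P z → b ≤ z := ⟨L, fun z ⟨i, hi, hiW⟩ => hiW ▸ hB i hi⟩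
  have Hinh : ∃ z : ℤ, P z := by
    obtain ⟨i, hi⟩ := hex
    exact ⟨W p α β F i, i, hi, rfl⟩
  obtain ⟨B, hBmem, hBleast⟩ := Int.exists_least_of_bdd Hbdd Hinh
  obtain ⟨i0, hi0, hi0W⟩ := hBmem
  have hQ : ∃ k, PowerSeries.coeff (R := ℚ_[p]) k F ≠ 0 ∧ W p α β F k = B := ⟨i0, hi0, hi0W⟩
  refine ⟨B, Nat.find hQ, fun i hi => ?_, (Nat.find_spec hQ).1, (Nat.find_spec hQ).2,
    fun k hk hkc hkW => ?_⟩
  · exact hBleast _ ⟨i, hi, rfl⟩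
  · exact (Nat.find_min hQ hk) ⟨hkc, hkW⟩

lemma attain_mul {α β A B : ℤ} (hα : 1 ≤ α) {F G : PowerSeries ℚ_[p]} {k1 i1 : ℕ}
    (hFB : Bdd p α β A F) (hFk : PowerSeries.coeff (R := ℚ_[p]) k1 F ≠ 0)
    (hFW : W p α β F k1 = A)
    (hFleast : ∀ k < k1, PowerSeries.coeff (R := ℚ_[p]) k F ≠ 0 → W p α β F k ≠ A)
    (hGB : Bdd p α β B G) (hGi : PowerSeries.coeff (R := ℚ_[p]) i1 G ≠ 0)
    (hGW : W p α β G i1 = B)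
    (hGleast : ∀ k < i1, PowerSeries.coeff (R := ℚ_[p]) k G ≠ 0 → W p α β G k ≠ B) :
    PowerSeries.coeff (R := ℚ_[p]) (k1 + i1) (F * G) ≠ 0 ∧
      W p α β (F * G) (k1 + i1) = A + B := by
  classical
  set m : ℚ_[p] := PowerSeries.coeff (R := ℚ_[p]) k1 F * PowerSeries.coeff (R := ℚ_[p]) i1 G with hm
  have hmne : m ≠ 0 := mul_ne_zero hFk hGi
  have hmval : m.valuation = (PowerSeries.coeff (R := ℚ_[p]) k1 F).valuation
      + (PowerSeries.coeff (R := ℚ_[p]) i1 G).valuation := Padic.valuation_mul hFk hGi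
  have hp1 : (1 : ℝ) < (p : ℝ) := by exact_mod_cast (Fact.out : p.Prime).one_lt
  have hp0 : (0 : ℝ) < (p : ℝ) := lt_trans one_pos hp1
  -- each non-main term has valuation ≥ m.valuation + 1 (or is zero)
  have hterm : ∀ q ∈ (Finset.HasAntidiagonal.antidiagonal (k1 + i1)).erase (k1, i1),
      ‖PowerSeries.coeff (R := ℚ_[p]) q.1 F * PowerSeries.coeff (R := ℚ_[p]) q.2 G‖
        ≤ (p : ℝ) ^ (-(m.valuation + 1)) := by
    rintro ⟨a, b⟩ hq
    obtain ⟨hne, hab⟩ := Finset.mem_erase.mp hq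
    have hab' : a + b = k1 + i1 := Finset.HasAntidiagonal.mem_antidiagonal.mp hab
    by_cases hFa : PowerSeries.coeff (R := ℚ_[p]) a F = 0
    · simp only [hFa, zero_mul, norm_zero]
      positivity
    by_cases hGb : PowerSeries.coeff (R := ℚ_[p]) b G = 0
    · simp only [hGb, mul_zero, norm_zero]
      positivity
    -- strict weight bound
    have hW : A + B + 1 ≤ W p α β F a + W p α β G b := by
      rcases lt_trichotomy a k1 with hlt | heq | hgt
      · have h1 : W p α β F a ≠ A := hFleast a hlt hFa
        have h2 : A ≤ W p α β F a := hFB a hFa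
        have h3 : B ≤ W p α β G b := hGB b hGb
        omega
      · exfalso; apply hne; simp only [heq, Prod.mk.injEq, true_and]; omega
      · have hblt : b < i1 := by omega
        have h1 : W p α β G b ≠ B := hGleast b hblt hGb
        have h2 : B ≤ W p α β G b := hGB b hGb
        have h3 : A ≤ W p α β F a := hFB a hFa
        omega
    have hval : m.valuation + 1 ≤ ((PowerSeries.coeff (R := ℚ_[p]) a F)
        * (PowerSeries.coeff (R := ℚ_[p]) b G)).valuation := by
      rw [Padic.valuation_mul hFa hGb]
      unfold W at hW hFW hGW
      have hβ : β * (a : ℤ) + β * (b : ℤ) = β * (k1 : ℤ) + β * (i1 : ℤ) := by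
        have h : (a : ℤ) + b = (k1 : ℤ) + i1 := by exact_mod_cast congrArg (Nat.cast : ℕ → ℤ) hab'
        linear_combination β * h
      rw [hmval]
      nlinarith [hW, hFW, hGW, hβ, hα]
    exact norm_le_of_val (mul_ne_zero hFa hGb) hval
  have hrest : ‖∑ q ∈ (Finset.HasAntidiagonal.antidiagonal (k1 + i1)).erase (k1, i1),
      PowerSeries.coeff (R := ℚ_[p]) q.1 F * PowerSeries.coeff (R := ℚ_[p]) q.2 G‖
        ≤ (p : ℝ) ^ (-(m.valuation + 1)) :=
    norm_sum_le _ _ (by positivity) hterm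
  have hmain_norm : ‖m‖ = (p : ℝ) ^ (-m.valuation) := Padic.norm_eq_zpow_neg_valuation hmne
  have hlt : (p : ℝ) ^ (-(m.valuation + 1)) < ‖m‖ := by
    rw [hmain_norm]
    exact zpow_lt_zpow_right₀ hp1 (by omega)
  have hsum : PowerSeries.coeff (R := ℚ_[p]) (k1 + i1) (F * G)
      = m + ∑ q ∈ (Finset.HasAntidiagonal.antidiagonal (k1 + i1)).erase (k1, i1),
        PowerSeries.coeff (R := ℚ_[p]) q.1 F * PowerSeries.coeff (R := ℚ_[p]) q.2 G := by
    rw [PowerSeries.coeff_mul]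
    exact (Finset.add_sum_erase (Finset.HasAntidiagonal.antidiagonal (k1 + i1))
      (fun q => PowerSeries.coeff (R := ℚ_[p]) q.1 F * PowerSeries.coeff (R := ℚ_[p]) q.2 G)
      (Finset.HasAntidiagonal.mem_antidiagonal.mpr rfl)).symm
  have hnorm : ‖PowerSeries.coeff (R := ℚ_[p]) (k1 + i1) (F * G)‖ = ‖m‖ := by
    rw [hsum]
    exact norm_add_eq_left (lt_of_le_of_lt hrest hlt)
  have hne0 : PowerSeries.coeff (R := ℚ_[p]) (k1 + i1) (F * G) ≠ 0 := by
    intro h0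
    rw [h0, norm_zero] at hnorm
    exact hmne (norm_le_zero_iff.mp hnorm.symm.le)
  have hveq : (PowerSeries.coeff (R := ℚ_[p]) (k1 + i1) (F * G)).valuation = m.valuation := by
    have := hnorm
    rw [Padic.norm_eq_zpow_neg_valuation hne0, hmain_norm] at this
    have hne1 : (p : ℝ) ≠ 1 := ne_of_gt hp1
    have := zpow_right_injective₀ hp0 hne1 this
    omega
  refine ⟨hne0, ?_⟩
  unfold W at hFW hGW ⊢
  rw [hveq, hmval]
  push_cast
  nlinarith [hFW, hGW]

end AV4

namespace AV5
open AV AV2 AV3 AV4 PowerSeries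

variable (p) in
noncomputable def gam : ℚ_[p] := 1 + (p : ℚ_[p])

lemma norm_gam : ‖gam p‖ = 1 := by
  unfold gam
  rw [norm_add_eq_left (by simpa using (Padic.norm_p_lt_one (p := p)))]
  simp

lemma gam_ne_zero : gam p ≠ 0 := by
  intro h
  have := norm_gam (p := p)
  rw [h, norm_zero] at this
  norm_num at this

lemma norm_pow_sub_one_le {x : ℚ_[p]} (hx : ‖x‖ ≤ 1) (n : ℕ) : ‖x ^ n - 1‖ ≤ ‖x - 1‖ := by
  induction n with
  | zero => simp
  | succ n ih =>
    have : x ^ (n + 1) - 1 = x ^ n * (x - 1) + (x ^ n - 1) := by ring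
    rw [this]
    refine le_trans (Padic.nonarchimedean _ _) (max_le ?_ ih)
    rw [norm_mul]
    calc ‖x ^ n‖ * ‖x - 1‖ ≤ 1 * ‖x - 1‖ := by
          refine mul_le_mul_of_nonneg_right ?_ (norm_nonneg _)
          calc ‖x ^ n‖ = ‖x‖ ^ n := norm_pow x n
          _ ≤ 1 := pow_le_one₀ (norm_nonneg _) hx
      _ = ‖x - 1‖ := one_mul _

lemma norm_zpow_sub_one_le {x : ℚ_[p]} (hx : ‖x‖ = 1) (hx0 : x ≠ 0) (j : ℤ) :
    ‖x ^ j - 1‖ ≤ ‖x - 1‖ := by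
  rcases le_or_gt 0 j with hj | hj
  · lift j to ℕ using hj
    rw [zpow_natCast]
    exact norm_pow_sub_one_le hx.le j
  · have hxj : ‖x ^ j‖ = 1 := by rw [norm_zpow, hx, one_zpow]
    have : x ^ j - 1 = -(x ^ j) * (x ^ (-j) - 1) := by
      have h1 : x ^ j * x ^ (-j) = 1 := by
        rw [← zpow_add₀ hx0]; simp
      linear_combination h1
    rw [this, norm_mul, norm_neg, hxj, one_mul]
    have : (0:ℤ) ≤ -j := by omega
    lift (-j) to ℕ using this with k hk
    rw [zpow_natCast]
    exact norm_pow_sub_one_le hx.le k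

lemma norm_gam_pow_pow (m : ℕ) : ‖gam p ^ (p ^ m) - 1‖ ≤ (p : ℝ) ^ (-(m + 1) : ℤ) := by
  have hp1 : (1 : ℝ) < (p : ℝ) := by exact_mod_cast (Fact.out : p.Prime).one_lt
  have hp0 : (0 : ℝ) < (p : ℝ) := lt_trans one_pos hp1
  induction m with
  | zero =>
    simp only [pow_zero, pow_one, gam, add_sub_cancel_left]
    rw [Padic.norm_p]
    norm_num
  | succ m ih =>
    set a : ℚ_[p] := gam p ^ (p ^ m) with ha
    have hna : ‖a‖ = 1 := by rw [ha, norm_pow, norm_gam, one_pow]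
    have key : gam p ^ (p ^ (m + 1)) - 1 = (a - 1) * (∑ i ∈ Finset.range p, a ^ i) := by
      have h1 : gam p ^ (p ^ (m + 1)) = a ^ p := by
        rw [ha, ← pow_mul, pow_succ]
      rw [h1, mul_comm (a - 1), geom_sum_mul a p]
    have hsum : ‖∑ i ∈ Finset.range p, a ^ i‖ ≤ (p : ℝ)⁻¹ := by
      have : (∑ i ∈ Finset.range p, a ^ i)
          = (∑ i ∈ Finset.range p, (a ^ i - 1)) + (p : ℚ_[p]) := by
        rw [Finset.sum_sub_distrib]
        simp
      rw [this]
      refine le_trans (Padic.nonarchimedean _ _) (max_le ?_ (le_of_eq Padic.norm_p))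
      refine norm_sum_le _ _ (by positivity) fun i _ => ?_
      calc ‖a ^ i - 1‖ ≤ ‖a - 1‖ := norm_pow_sub_one_le hna.le i
        _ ≤ (p : ℝ) ^ (-(m + 1) : ℤ) := ih
        _ ≤ (p : ℝ) ^ (-1 : ℤ) := zpow_le_zpow_right₀ hp1.le (by omega)
        _ = (p : ℝ)⁻¹ := by simp
    calc ‖gam p ^ (p ^ (m + 1)) - 1‖ = ‖a - 1‖ * ‖∑ i ∈ Finset.range p, a ^ i‖ := by
          rw [key, norm_mul]
      _ ≤ (p : ℝ) ^ (-(m + 1) : ℤ) * (p : ℝ)⁻¹ := by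
          refine mul_le_mul ih hsum (norm_nonneg _) (by positivity)
      _ = (p : ℝ) ^ (-(m + 1 + 1) : ℤ) := by
          rw [← zpow_neg_one, ← zpow_add₀ hp0.ne']
          ring_nf
      _ = (p : ℝ) ^ (-(↑(m + 1) + 1) : ℤ) := by push_cast; ring_nf

/-- the interpolation nodes -/
noncomputable def cc (p : ℕ) [Fact p.Prime] (m : ℕ) (j : ℤ) : ℚ_[p] :=
  (1 + (p : ℚ_[p])) ^ (j * (p : ℤ) ^ m)

lemma cc_eq (m : ℕ) (j : ℤ) : cc p m j = (gam p ^ (p ^ m)) ^ j := by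
  unfold cc gam
  rw [← zpow_natCast (1 + (p:ℚ_[p])) (p ^ m), ← zpow_mul]
  congr 1
  push_cast
  ring

lemma norm_cc_sub_one (m : ℕ) (j : ℤ) : ‖cc p m j - 1‖ ≤ (p : ℝ) ^ (-(m + 1) : ℤ) := by
  rw [cc_eq]
  have hna : ‖gam p ^ (p ^ m)‖ = 1 := by rw [norm_pow, norm_gam, one_pow]
  exact le_trans (norm_zpow_sub_one_le hna (pow_ne_zero _ gam_ne_zero) j) (norm_gam_pow_pow m)

lemma gam_zpow_eq_one {k : ℤ} (h : gam p ^ k = 1) : k = 0 := by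
  by_contra hk
  -- reduce to natural exponent
  have key : ∀ n : ℕ, n ≠ 0 → gam p ^ n ≠ 1 := by
    intro n hn hgn
    have : ((1 + p) ^ n : ℕ) = ((1 : ℕ)) := by
      have hcast : (((1 + p) ^ n : ℕ) : ℚ_[p]) = gam p ^ n := by
        push_cast [gam]; ring_nf
      have : (((1 + p) ^ n : ℕ) : ℚ_[p]) = ((1 : ℕ) : ℚ_[p]) := by rw [hcast, hgn]; simp
      exact_mod_cast this
    have hp2 : 2 ≤ 1 + p := by have := (Fact.out : p.Prime).two_le; omega
    have : 2 ^ n ≤ (1 + p) ^ n := Nat.pow_le_pow_left hp2 n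
    have h2 : 2 ^ n ≥ 2 := by
      calc 2 ^ n ≥ 2 ^ 1 := Nat.pow_le_pow_right (by norm_num) (by omega)
        _ = 2 := by norm_num
    omega
  rcases lt_or_gt_of_ne hk with hneg | hpos
  · have : gam p ^ (-k) = 1 := by
      rw [zpow_neg, h, inv_one]
    have hkn : (0:ℤ) ≤ -k := by omega
    lift (-k) to ℕ using hkn with n hn
    rw [zpow_natCast] at this
    exact key n (by omega) this
  · lift k to ℕ using hpos.le with n hn
    rw [zpow_natCast] at h
    exact key n (by omega) h

lemma cc_injective (m : ℕ) : Function.Injective (cc p m) := by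
  intro j j' hjj
  have h1 : gam p ^ (j * (p:ℤ)^m) = gam p ^ (j' * (p:ℤ)^m) := by
    simpa only [cc, gam] using hjj
  have h2 : gam p ^ (j * (p:ℤ)^m - j' * (p:ℤ)^m) = 1 := by
    rw [zpow_sub₀ gam_ne_zero, h1, div_self (zpow_ne_zero _ gam_ne_zero)]
  have := gam_zpow_eq_one h2
  have hpm : ((p:ℤ))^m ≠ 0 := pow_ne_zero _ (by exact_mod_cast (Fact.out : p.Prime).pos.ne')
  have : (j - j') * (p:ℤ)^m = 0 := by linarith [this]
  rcases mul_eq_zero.mp this with h | h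
  · omega
  · exact absurd h hpm

end AV5

namespace AV6
open AV AV2 AV3 AV4 AV5 PowerSeries

lemma omegaNJ_eq (m : ℕ) (j : ℤ) :
    omegaNJ p m j = (1 + PowerSeries.X) ^ (p ^ m) - PowerSeries.C (R := ℚ_[p]) (cc p m j) := rfl

lemma coeff_one_add_X_pow (N i : ℕ) :
    PowerSeries.coeff (R := ℚ_[p]) i ((1 + PowerSeries.X) ^ N) = (N.choose i : ℚ_[p]) := by
  have hcoe : ((((1 + Polynomial.X : Polynomial ℚ_[p])) ^ N : Polynomial ℚ_[p]) : PowerSeries ℚ_[p])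
      = (1 + PowerSeries.X) ^ N := by
    rw [Polynomial.coe_pow, Polynomial.coe_add, Polynomial.coe_one, Polynomial.coe_X]
  rw [← hcoe, Polynomial.coeff_coe, Polynomial.coeff_one_add_X_pow]

lemma coeff_omega_zero (m : ℕ) (j : ℤ) :
    PowerSeries.coeff (R := ℚ_[p]) 0 (omegaNJ p m j) = 1 - cc p m j := by
  rw [omegaNJ_eq, map_sub, coeff_one_add_X_pow, PowerSeries.coeff_zero_C]
  simp

lemma coeff_omega_pos (m : ℕ) (j : ℤ) {i : ℕ} (hi : i ≠ 0) :
    PowerSeries.coeff (R := ℚ_[p]) i (omegaNJ p m j) = ((p ^ m).choose i : ℚ_[p]) := by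
  rw [omegaNJ_eq, map_sub, coeff_one_add_X_pow, PowerSeries.coeff_C, if_neg hi]
  simp

lemma val_choose (m : ℕ) {i : ℕ} (hi1 : 1 ≤ i) (hi2 : i ≤ p ^ m) :
    (m : ℤ) - padicValNat p i ≤ (((p ^ m).choose i : ℚ_[p])).valuation := by
  have hp : p.Prime := Fact.out
  -- Nat identity
  have hnat : p ^ m * (p ^ m - 1).choose (i - 1) = (p ^ m).choose i * i := by
    have := Nat.add_one_mul_choose_eq (p ^ m - 1) (i - 1)
    have h1 : p ^ m - 1 + 1 = p ^ m := Nat.succ_pred_eq_of_pos (pow_pos hp.pos m)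
    have h2 : i - 1 + 1 = i := Nat.succ_pred_eq_of_pos hi1
    rw [h1, h2] at this
    exact this
  have hchoose_ne : (p ^ m).choose i ≠ 0 := (Nat.choose_pos hi2).ne'
  have hc' : (p ^ m - 1).choose (i - 1) ≠ 0 := (Nat.choose_pos (by omega)).ne'
  -- valuations over ℕ
  have hval : padicValNat p (p ^ m * (p ^ m - 1).choose (i - 1))
      = padicValNat p ((p ^ m).choose i * i) := by rw [hnat]
  rw [padicValNat.mul (pow_ne_zero m hp.pos.ne') hc', padicValNat.mul hchoose_ne (by omega),
    padicValNat.prime_pow] at hval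
  rw [Padic.valuation_natCast]
  omega

lemma sq_le_two_pow : ∀ d : ℕ, 4 ≤ d → d * d ≤ 2 ^ d := by
  intro d hd
  induction d, hd using Nat.le_induction with
  | base => norm_num
  | succ d hd ih =>
    have h2 : 2 * d + 1 ≤ d * d := by nlinarith
    have h3 : (d+1) * (d+1) = d * d + (2 * d + 1) := by ring
    rw [h3, pow_succ]
    omega

lemma nat_key (h d : ℕ) (hd : h + 5 ≤ d) : h * (d - h - 4) ≤ 2 ^ d := by
  calc h * (d - h - 4) ≤ d * d := Nat.mul_le_mul (by omega) (by omega)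
    _ ≤ 2 ^ d := sq_le_two_pow d (by omega)

end AV6

namespace AV7
open AV AV2 AV3 AV4 AV5 AV6 PowerSeries

variable (p) in
/-- the scaling factor `(p-1)p^(m-1)` -/
def alpha (m : ℕ) : ℤ := ((p : ℤ) - 1) * (p : ℤ) ^ (m - 1)

lemma alpha_pos (m : ℕ) : 1 ≤ alpha p m := by
  have hp2 : 2 ≤ (p : ℤ) := by exact_mod_cast (Fact.out : p.Prime).two_le
  have h1 : (1:ℤ) ≤ (p : ℤ) - 1 := by omega
  have h2 : (1:ℤ) ≤ (p : ℤ) ^ (m - 1) := one_le_pow₀ (by omega)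
  calc (1:ℤ) = 1 * 1 := by ring
    _ ≤ alpha p m := mul_le_mul h1 h2 (by norm_num) (by omega)

lemma alpha_le (m : ℕ) (hm : 1 ≤ m) : alpha p m ≤ (p : ℤ) ^ m := by
  have hp2 : 2 ≤ (p : ℤ) := by exact_mod_cast (Fact.out : p.Prime).two_le
  have : (p : ℤ) ^ m = (p : ℤ) * (p : ℤ) ^ (m - 1) := by
    rw [← pow_succ']
    congr 1
    omega
  rw [this, alpha]
  have h2 : (0:ℤ) ≤ (p : ℤ) ^ (m - 1) := by positivity
  nlinarith

lemma pow_pred_le_alpha (m : ℕ) : (p:ℤ)^(m-1) ≤ alpha p m := by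
  have hp2 : 2 ≤ (p : ℤ) := by exact_mod_cast (Fact.out : p.Prime).two_le
  have h2 : (0:ℤ) ≤ (p : ℤ) ^ (m - 1) := by positivity
  unfold alpha
  nlinarith

lemma pow_le_two_alpha (m : ℕ) (hm : 1 ≤ m) : (p:ℤ)^m ≤ 2 * alpha p m := by
  have hp2 : 2 ≤ (p : ℤ) := by exact_mod_cast (Fact.out : p.Prime).two_le
  have h2 : (0:ℤ) ≤ (p : ℤ) ^ (m - 1) := by positivity
  have hsplit : (p:ℤ)^m = (p:ℤ) * (p:ℤ)^(m-1) := by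
    rw [← pow_succ']
    congr 1
    omega
  rw [hsplit]
  unfold alpha
  nlinarith

lemma val_coeff_omega_nonneg (m : ℕ) (j : ℤ) {i : ℕ}
    (hc : PowerSeries.coeff (R := ℚ_[p]) i (omegaNJ p m j) ≠ 0) :
    0 ≤ (PowerSeries.coeff (R := ℚ_[p]) i (omegaNJ p m j)).valuation := by
  have hp1 : (1 : ℝ) < (p : ℝ) := by exact_mod_cast (Fact.out : p.Prime).one_lt
  rcases Nat.eq_zero_or_pos i with hi | hi
  · subst hi
    rw [coeff_omega_zero] at hc ⊢
    refine val_le_of_norm hc ?_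
    have h1 : ‖(1 : ℚ_[p]) - cc p m j‖ = ‖cc p m j - 1‖ := by
      rw [← norm_neg]; ring_nf
    rw [h1]
    calc ‖cc p m j - 1‖ ≤ (p:ℝ) ^ (-(m+1) : ℤ) := norm_cc_sub_one m j
      _ ≤ (p:ℝ) ^ (-(0:ℤ)) := zpow_le_zpow_right₀ hp1.le (by omega)
  · rw [coeff_omega_pos m j hi.ne'] at hc ⊢
    rw [Padic.valuation_natCast]
    positivity

lemma omega_bdd0 (m : ℕ) (j : ℤ) : Bdd p (alpha p m) 1 0 (omegaNJ p m j) := by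
  intro i hi
  unfold W
  have h1 := val_coeff_omega_nonneg m j hi
  have h2 : (0:ℤ) ≤ alpha p m := le_trans zero_le_one (alpha_pos m)
  have h3 : (0:ℤ) ≤ (i:ℤ) := Int.natCast_nonneg i
  nlinarith

lemma omega_bddM (m : ℕ) (hm : 1 ≤ m) (j : ℤ) :
    Bdd p (alpha p m) ((p:ℤ) ^ (m - 1)) (alpha p m * m) (omegaNJ p m j) := by
  intro i hi
  unfold W
  have hp2 : 2 ≤ (p : ℤ) := by exact_mod_cast (Fact.out : p.Prime).two_le
  have hα0 : (0:ℤ) ≤ alpha p m := le_trans zero_le_one (alpha_pos m)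
  rcases Nat.eq_zero_or_pos i with hi0 | hi0
  · subst hi0
    rw [coeff_omega_zero] at hi ⊢
    have hval : (m:ℤ) + 1 ≤ ((1:ℚ_[p]) - cc p m j).valuation := by
      refine val_le_of_norm hi ?_
      have h1 : ‖(1 : ℚ_[p]) - cc p m j‖ = ‖cc p m j - 1‖ := by
        rw [← norm_neg]; ring_nf
      rw [h1]
      exact norm_cc_sub_one m j
    push_cast
    nlinarith
  · rw [coeff_omega_pos m j hi0.ne'] at hi ⊢
    -- i ≤ p ^ m since the binomial coefficient is nonzero
    have hile : i ≤ p ^ m := by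
      by_contra hgt
      push_neg at hgt
      rw [Nat.choose_eq_zero_of_lt hgt] at hi
      simp at hi
    set r : ℕ := padicValNat p i with hr
    have hval : (m : ℤ) - r ≤ (((p ^ m).choose i : ℚ_[p])).valuation := val_choose m hi0 hile
    -- p ^ r ≤ i
    have hpr : (p : ℤ) ^ r ≤ (i : ℤ) := by
      have : p ^ r ∣ i := pow_padicValNat_dvd
      exact_mod_cast Nat.le_of_dvd hi0 this
    -- (p-1) * r + 1 ≤ p ^ r
    have hgeo : ((p:ℤ) - 1) * r + 1 ≤ (p:ℤ) ^ r := by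
      have := one_add_mul_le_pow (a := (p:ℤ) - 1) (by omega) r
      calc ((p:ℤ) - 1) * r + 1 = 1 + r * ((p:ℤ) - 1) := by ring
        _ ≤ (1 + ((p:ℤ) - 1)) ^ r := this
        _ = (p:ℤ) ^ r := by ring_nf
    -- key: p^(m-1) * i ≥ alpha * r
    have hkey : alpha p m * r ≤ (p:ℤ)^(m-1) * i := by
      calc alpha p m * r = (p:ℤ)^(m-1) * (((p:ℤ) - 1) * r) := by rw [alpha]; ring
        _ ≤ (p:ℤ)^(m-1) * ((p:ℤ)^r) := by
            refine mul_le_mul_of_nonneg_left ?_ (by positivity)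
            omega
        _ ≤ (p:ℤ)^(m-1) * i := mul_le_mul_of_nonneg_left hpr (by positivity)
    nlinarith [hval, mul_le_mul_of_nonneg_left hval hα0]
end AV7

namespace AV8
open AV AV2 AV3 AV4 AV5 AV6 AV7 PowerSeries

lemma bdd_one {α β : ℤ} (hα : 0 ≤ α) : Bdd p α β 0 (1 : PowerSeries ℚ_[p]) := by
  intro i hi
  have hi0 : i = 0 := by
    by_contra h0
    rw [PowerSeries.coeff_one, if_neg h0] at hi
    exact hi rfl
  subst hi0
  unfold W
  rw [PowerSeries.coeff_one, if_pos rfl, Padic.valuation_one]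
  simp

lemma bdd_prod {ι : Type*} {α β : ℤ} (hα : 0 ≤ α) (s : Finset ι)
    (F : ι → PowerSeries ℚ_[p]) (Bf : ι → ℤ)
    (h : ∀ i ∈ s, Bdd p α β (Bf i) (F i)) :
    Bdd p α β (∑ i ∈ s, Bf i) (∏ i ∈ s, F i) := by
  classical
  induction s using Finset.induction_on with
  | empty => simpa using bdd_one hα
  | @insert a s' ha ih =>
    rw [Finset.sum_insert ha, Finset.prod_insert ha]
    exact bdd_mul hα (h a (by simp)) (ih fun i hi => h i (by simp [hi]))

/-- the key growth estimate -/
lemma key_ell (h m : ℕ) (hm : 1 ≤ m) (i : ℕ) :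
    alpha p m * ((h:ℤ) * (ell p i : ℤ)) ≤ (i:ℤ) + alpha p m * (h * ((m:ℤ) + h + 5)) := by
  have hα0 : (0:ℤ) ≤ alpha p m := le_trans zero_le_one (alpha_pos m)
  have hp2 : 2 ≤ (p : ℤ) := by exact_mod_cast (Fact.out : p.Prime).two_le
  rcases Nat.eq_zero_or_pos i with h0 | h0
  · subst h0
    simp only [ell, if_pos rfl]
    push_cast
    have : (0:ℤ) ≤ alpha p m * (h * ((m:ℤ) + h + 5)) := by positivity
    simpa using this
  · have hell : (ell p i : ℤ) = (Nat.log p i : ℤ) + 1 := by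
      simp [ell, h0.ne']
    set r : ℕ := Nat.log p i with hrdef
    rw [hell]
    rcases Nat.lt_or_ge r (m + h + 5) with hcase | hcase
    · have : (r:ℤ) + 1 ≤ (m:ℤ) + h + 5 := by exact_mod_cast hcase
      have h2 : alpha p m * ((h:ℤ) * ((r:ℤ)+1)) ≤ alpha p m * (h * ((m:ℤ) + h + 5)) := by
        refine mul_le_mul_of_nonneg_left ?_ hα0
        nlinarith [this]
      have h3 : (0:ℤ) ≤ (i:ℤ) := Int.natCast_nonneg i
      omega
    · -- large r case
      have hd : h + 5 ≤ r - m := by omega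
      have hrm : m ≤ r := by omega
      -- h * (r - m - h - 4) ≤ 2 ^ (r - m) ≤ p ^ (r - m)
      have h1 : h * (r - m - h - 4) ≤ 2 ^ (r - m) := nat_key h (r - m) hd
      have h2 : (2:ℕ) ^ (r - m) ≤ p ^ (r - m) :=
        Nat.pow_le_pow_left (by exact_mod_cast (by omega : 2 ≤ (p:ℤ)) ) _
      -- p ^ r ≤ i
      have hpr : p ^ r ≤ i := Nat.pow_log_le_self p h0.ne'
      -- combine in ℤ
      have hint : (h : ℤ) * ((r:ℤ) - m - h - 4) ≤ (p:ℤ) ^ (r - m) := by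
        have hsub : ((r - m - h - 4 : ℕ) : ℤ) = (r:ℤ) - m - h - 4 := by omega
        have hcast : ((h * (r - m - h - 4) : ℕ) : ℤ) = (h:ℤ) * ((r:ℤ) - m - h - 4) := by
          rw [Nat.cast_mul, hsub]
        calc (h : ℤ) * ((r:ℤ) - m - h - 4) = ((h * (r - m - h - 4) : ℕ) : ℤ) := hcast.symm
          _ ≤ ((p ^ (r - m) : ℕ) : ℤ) := by exact_mod_cast le_trans h1 h2
          _ = (p:ℤ) ^ (r - m) := by push_cast; ring
      have hmul : alpha p m * ((h:ℤ) * ((r:ℤ) - m - h - 4)) ≤ (p:ℤ)^m * (p:ℤ)^(r-m) := by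
        rcases le_or_gt ((h:ℤ) * ((r:ℤ) - m - h - 4)) 0 with hneg | hpos
        · calc alpha p m * ((h:ℤ) * ((r:ℤ) - m - h - 4)) ≤ 0 :=
                mul_nonpos_of_nonneg_of_nonpos hα0 hneg
            _ ≤ (p:ℤ)^m * (p:ℤ)^(r-m) := by positivity
        · calc alpha p m * ((h:ℤ) * ((r:ℤ) - m - h - 4))
              ≤ (p:ℤ)^m * ((h:ℤ) * ((r:ℤ) - m - h - 4)) :=
                mul_le_mul_of_nonneg_right (alpha_le m hm) hpos.le
            _ ≤ (p:ℤ)^m * (p:ℤ)^(r-m) := mul_le_mul_of_nonneg_left hint (by positivity)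
      have hppow : (p:ℤ)^m * (p:ℤ)^(r-m) = (p:ℤ)^r := by
        rw [← pow_add]
        congr 1
        omega
      have hpri : (p:ℤ)^r ≤ (i:ℤ) := by exact_mod_cast hpr
      have hfin : alpha p m * ((h:ℤ) * ((r:ℤ) - m - h - 4)) ≤ (i:ℤ) :=
        le_trans (hppow ▸ hmul) hpri
      have hsplit : alpha p m * ((h:ℤ) * ((r:ℤ)+1))
          = alpha p m * ((h:ℤ) * ((r:ℤ) - m - h - 4))
            + alpha p m * ((h:ℤ) * ((m:ℤ)+h+5)) := by ring
      linarith
end AV8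

namespace AV9
open AV AV2 AV3 AV4 AV5 AV6 AV7 AV8 PowerSeries Polynomial

lemma aeval_basisDivisor (u : PowerSeries ℚ_[p]) (x y : ℚ_[p]) :
    Polynomial.aeval u (Lagrange.basisDivisor x y)
      = PowerSeries.C (R := ℚ_[p]) (x - y)⁻¹ * (u - PowerSeries.C (R := ℚ_[p]) y) := by
  unfold Lagrange.basisDivisor
  rw [map_mul, Polynomial.aeval_C, map_sub, Polynomial.aeval_X, Polynomial.aeval_C,
    ← PowerSeries.C_eq_algebraMap, ← PowerSeries.C_eq_algebraMap]

lemma omegaNJ_eq_sub (m : ℕ) (j : ℤ) :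
    omegaNJ p m j = (1 + PowerSeries.X) ^ (p ^ m) - PowerSeries.C (R := ℚ_[p]) (cc p m j) := rfl

variable (p) in
noncomputable def mu (m : ℕ) (J : Finset ℤ) (j : ℤ) : ℚ_[p] :=
  ∏ j' ∈ J.erase j, (cc p m j - cc p m j')⁻¹

lemma mu_ne_zero (m : ℕ) (J : Finset ℤ) {j : ℤ} : mu p m J j ≠ 0 := by
  unfold mu
  rw [Finset.prod_ne_zero_iff]
  intro j' hj'
  have hne : j ≠ j' := fun h => (Finset.ne_of_mem_erase hj') h.symm
  have : cc p m j ≠ cc p m j' := fun hc => hne (cc_injective m hc)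
  simpa [sub_eq_zero] using this

/-- the partial fraction / Lagrange identity -/
lemma sum_mu_prod (m : ℕ) (J : Finset ℤ) (hJ : J.Nonempty) :
    (∑ j ∈ J, PowerSeries.C (R := ℚ_[p]) (mu p m J j) * ∏ j' ∈ J.erase j, omegaNJ p m j') = 1 := by
  have hinj : Set.InjOn (fun j => cc p m j) ↑J := (cc_injective m).injOn
  have hsum := Lagrange.sum_basis hinj hJ
  have := congrArg (Polynomial.aeval ((1 + PowerSeries.X) ^ (p ^ m) : PowerSeries ℚ_[p])) hsum
  rw [map_sum, map_one] at this
  rw [← this]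
  refine Finset.sum_congr rfl fun j hj => ?_
  unfold Lagrange.basis
  rw [map_prod]
  have : ∀ j' ∈ J.erase j,
      Polynomial.aeval ((1 + PowerSeries.X) ^ (p ^ m) : PowerSeries ℚ_[p])
        (Lagrange.basisDivisor (cc p m j) (cc p m j'))
      = PowerSeries.C (R := ℚ_[p]) ((cc p m j - cc p m j')⁻¹) * omegaNJ p m j' := by
    intro j' _
    rw [aeval_basisDivisor, omegaNJ_eq_sub]
  rw [Finset.prod_congr rfl this, Finset.prod_mul_distrib]
  congr 1
  unfold mu
  rw [map_prod]

/-- the product factorization of `f` -/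
lemma prod_factorization {h : ℕ} {f : PowerSeries ℚ_[p]} (m : ℕ) (J : Finset ℤ)
    (hJ : J.Nonempty) (g : ℤ → PowerSeries ℚ_[p])
    (hg : ∀ j ∈ J, f = omegaNJ p m j * g j) :
    f = (∏ j ∈ J, omegaNJ p m j) *
      (∑ j ∈ J, PowerSeries.C (R := ℚ_[p]) (mu p m J j) * g j) := by
  rw [Finset.mul_sum]
  have : ∀ j ∈ J, (∏ j' ∈ J, omegaNJ p m j') * (PowerSeries.C (R := ℚ_[p]) (mu p m J j) * g j)
      = PowerSeries.C (R := ℚ_[p]) (mu p m J j) * (∏ j' ∈ J.erase j, omegaNJ p m j') * f := by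
    intro j hj
    rw [← Finset.mul_prod_erase _ _ hj, hg j hj]
    ring
  rw [Finset.sum_congr rfl this, ← Finset.sum_mul, sum_mu_prod m J hJ, one_mul]

end AV9

namespace AV10
open AV AV2 AV3 AV4 AV5 AV6 AV7 AV8 AV9 PowerSeries

/-- bridge: an `Hh` bound gives a `Bdd` bound at scale `(α, 1)` -/
lemma hh_bdd {h : ℕ} {C : ℤ} {F : PowerSeries ℚ_[p]}
    (hC : ∀ i : ℕ, PowerSeries.coeff (R := ℚ_[p]) i F ≠ 0 →
      C ≤ (PowerSeries.coeff (R := ℚ_[p]) i F).valuation + (h : ℤ) * (ell p i : ℤ))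
    {m : ℕ} (hm : 1 ≤ m) :
    Bdd p (alpha p m) 1 (alpha p m * (C - (h:ℤ) * ((m:ℤ) + h + 5))) F := by
  intro i hi
  unfold W
  have hα0 : (0:ℤ) ≤ alpha p m := le_trans zero_le_one (alpha_pos m)
  have h1 := hC i hi
  have h2 := key_ell (p := p) h m hm i
  set v : ℤ := (PowerSeries.coeff (R := ℚ_[p]) i F).valuation with hv
  have h3 : alpha p m * (C - (h:ℤ) * (ell p i : ℤ)) ≤ alpha p m * v :=
    mul_le_mul_of_nonneg_left (by linarith) hα0
  have h4 : alpha p m * (C - (h:ℤ) * (ell p i : ℤ))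
      = alpha p m * C - alpha p m * ((h:ℤ) * (ell p i : ℤ)) := by ring
  have h5 : alpha p m * (C - (h:ℤ) * ((m:ℤ) + h + 5))
      = alpha p m * C - alpha p m * ((h:ℤ) * ((m:ℤ) + h + 5)) := by ring
  rw [h5]
  rw [h4] at h3
  have : (1:ℤ) * i = i := one_mul _
  nlinarith [h2, h3]

end AV10

set_option maxHeartbeats 2000000 in
theorem Hh_uniqueness (p : ℕ) [Fact p.Prime] (h : ℕ) (l l' : ℤ)
    (hll : (h : ℤ) = l' - l)
    (f : PowerSeries ℚ_[p]) (hf : f ∈ Hh p h)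
    (hdiv : ∀ n : ℕ, 1 ≤ n → ∀ j : ℤ, l ≤ j → j ≤ l' →
      ∃ g ∈ Hh p h, f = omegaNJ p n j * g) :
    f = 0 := by
  classical
  open AV AV2 AV3 AV4 AV5 AV6 AV7 AV8 AV9 AV10 in
  by_contra hf0
  obtain ⟨Cf, hCf⟩ := hf
  have hex : ∃ i, PowerSeries.coeff (R := ℚ_[p]) i f ≠ 0 := by
    by_contra hc
    push_neg at hc
    exact hf0 (PowerSeries.ext fun i => by simpa using hc i)
  obtain ⟨istar, histar⟩ := hex
  set Dstar : ℤ := (PowerSeries.coeff (R := ℚ_[p]) istar f).valuation + istar with hDstar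
  set M0 : ℤ := (h:ℤ) * ((h:ℤ) + 5) + 2 * ((h:ℤ) + 1) + Dstar - Cf with hM0
  set m : ℕ := M0.toNat + 1 with hmdef
  have hm : 1 ≤ m := by omega
  have hmM0 : M0 < (m : ℤ) := by
    have : M0 ≤ (M0.toNat : ℤ) := Int.self_le_toNat M0
    omega
  -- the index set
  set J : Finset ℤ := Finset.Icc l l' with hJdef
  have hll' : l ≤ l' := by omega
  have hJne : J.Nonempty := ⟨l, by simp [hJdef, hll']⟩
  have hJcard : (J.card : ℤ) = (h:ℤ) + 1 := by
    rw [hJdef, Int.card_Icc]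
    omega
  -- choose the quotients
  choose g hg1 hg2 using hdiv
  set gg : ℤ → PowerSeries ℚ_[p] := fun j =>
    if hj : j ∈ J then g m hm j (Finset.mem_Icc.mp hj).1 (Finset.mem_Icc.mp hj).2 else 0
    with hggdef
  have hgg2 : ∀ j ∈ J, f = omegaNJ p m j * gg j := by
    intro j hj
    rw [hggdef]
    simp only [dif_pos hj]
    exact hg2 m hm j _ _
  have hgg1 : ∀ j ∈ J, gg j ∈ Hh p h := by
    intro j hj
    rw [hggdef]
    simp only [dif_pos hj]
    exact hg1 m hm j _ _
  -- the product and the quotient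
  set Q : PowerSeries ℚ_[p] := ∏ j ∈ J, omegaNJ p m j with hQdef
  set G : PowerSeries ℚ_[p] := ∑ j ∈ J, PowerSeries.C (R := ℚ_[p]) (mu p m J j) * gg j with hGdef
  have hfQG : f = Q * G := prod_factorization (h := h) m J hJne gg hgg2
  have hGne : G ≠ 0 := by
    intro h0
    rw [h0, mul_zero] at hfQG
    exact hf0 hfQG
  -- Hh-type bound for G
  choose Cg hCg using fun j (hj : j ∈ J) => hgg1 j hj
  set CG : ℤ := J.inf' hJne (fun j => if hj : j ∈ J then (mu p m J j).valuation + Cg j hj else 0)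
    with hCGdef
  have hCGbound : ∀ i : ℕ, PowerSeries.coeff (R := ℚ_[p]) i G ≠ 0 →
      CG ≤ (PowerSeries.coeff (R := ℚ_[p]) i G).valuation + (h : ℤ) * (ell p i : ℤ) := by
    intro i hi
    have hcoeff : PowerSeries.coeff (R := ℚ_[p]) i G
        = ∑ j ∈ J, mu p m J j * PowerSeries.coeff (R := ℚ_[p]) i (gg j) := by
      rw [hGdef, map_sum]
      exact Finset.sum_congr rfl fun j _ => PowerSeries.coeff_C_mul i _ _
    rw [hcoeff] at hi ⊢
    obtain ⟨j, hj, hne, hval⟩ := exists_val_dominates _ _ hi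
    have hgne : PowerSeries.coeff (R := ℚ_[p]) i (gg j) ≠ 0 := fun h0 => hne (by rw [h0, mul_zero])
    have hmu : mu p m J j ≠ 0 := mu_ne_zero m J
    have hvmul : (mu p m J j * PowerSeries.coeff (R := ℚ_[p]) i (gg j)).valuation
        = (mu p m J j).valuation + (PowerSeries.coeff (R := ℚ_[p]) i (gg j)).valuation :=
      Padic.valuation_mul hmu hgne
    have hCgj := hCg j hj i hgne
    have hinf : CG ≤ (mu p m J j).valuation + Cg j hj := by
      rw [hCGdef]
      have := Finset.inf'_le (fun j => if hj : j ∈ J then (mu p m J j).valuation + Cg j hj else 0) hj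
      rwa [dif_pos hj] at this
    rw [hvmul] at hval
    omega
  -- scaling constants
  have hα1 : (1:ℤ) ≤ alpha p m := AV7.alpha_pos m
  have hα0 : (0:ℤ) ≤ alpha p m := le_trans zero_le_one hα1
  have hp2 : (2:ℤ) ≤ (p:ℤ) := by exact_mod_cast (Fact.out : p.Prime).two_le
  have hβ2 : (1:ℤ) ≤ (p:ℤ) ^ (m - 1) := one_le_pow₀ (by omega)
  -- Q is nonzero
  have hQne : Q ≠ 0 := by
    intro h0
    rw [h0, zero_mul] at hfQG
    exact hf0 hfQG
  -- bounds for Q at scale (α, 1)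
  have hBddQ1 : Bdd p (alpha p m) 1 0 Q := by
    have := bdd_prod (p := p) (α := alpha p m) (β := 1) hα0 J
      (fun j => omegaNJ p m j) (fun _ => 0) (fun j _ => omega_bdd0 m j)
    simpa using this
  -- least-weight data for Q and G at scale (α, 1)
  obtain ⟨A, k1, hQB, hQk, hQW, hQleast⟩ := exists_min hQne hBddQ1
  have hBddG1 : Bdd p (alpha p m) 1 (alpha p m * (CG - (h:ℤ) * ((m:ℤ) + h + 5))) G :=
    hh_bdd hCGbound hm
  obtain ⟨B, i1, hGB, hGk, hGW, hGleast⟩ := exists_min hGne hBddG1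
  -- top coefficient of Q is 1
  set N : ℕ := p ^ m with hN
  have hN1 : 1 ≤ N := Nat.one_le_pow _ _ (Fact.out : p.Prime).pos
  set d : ℕ := J.card * N with hd
  have hQtop : PowerSeries.coeff (R := ℚ_[p]) d Q = 1 := by
    set Pj : ℤ → Polynomial ℚ_[p] :=
      fun j => (1 + Polynomial.X) ^ N - Polynomial.C (cc p m j) with hPj
    have hm1 : ((1 : Polynomial ℚ_[p]) + Polynomial.X).Monic := by
      have h1 : ((1 : Polynomial ℚ_[p]) + Polynomial.X) = Polynomial.X + Polynomial.C 1 := by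
        rw [Polynomial.C_1, add_comm]
      rw [h1]
      exact Polynomial.monic_X_add_C 1
    have hmN : (((1 : Polynomial ℚ_[p]) + Polynomial.X) ^ N).Monic := hm1.pow N
    have hdegN : (((1 : Polynomial ℚ_[p]) + Polynomial.X) ^ N).natDegree = N := by
      rw [hm1.natDegree_pow]
      have h1 : ((1 : Polynomial ℚ_[p]) + Polynomial.X) = Polynomial.X + Polynomial.C 1 := by
        rw [Polynomial.C_1, add_comm]
      rw [h1, Polynomial.natDegree_X_add_C, mul_one]
    have hdpos : (0 : WithBot ℕ) < (((1 : Polynomial ℚ_[p]) + Polynomial.X) ^ N).degree := by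
      rw [Polynomial.degree_eq_natDegree hmN.ne_zero, hdegN]
      exact_mod_cast (by omega : (0:ℕ) < N)
    have hmon : ∀ j, (Pj j).Monic := by
      intro j
      exact hmN.sub_of_left (lt_of_le_of_lt Polynomial.degree_C_le hdpos)
    have hdegj : ∀ j, (Pj j).natDegree = N := by
      intro j
      rw [hPj]
      have := Polynomial.natDegree_sub_C (p := ((1 : Polynomial ℚ_[p]) + Polynomial.X) ^ N)
        (a := cc p m j)
      rw [this, hdegN]
    have hcoe : ((∏ j ∈ J, Pj j : Polynomial ℚ_[p]) : PowerSeries ℚ_[p]) = Q := by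
      rw [hQdef]
      have hmp : ((∏ j ∈ J, Pj j : Polynomial ℚ_[p]) : PowerSeries ℚ_[p])
          = ∏ j ∈ J, ((Pj j : Polynomial ℚ_[p]) : PowerSeries ℚ_[p]) :=
        map_prod (Polynomial.coeToPowerSeries.ringHom (R := ℚ_[p])) Pj J
      rw [hmp]
      refine Finset.prod_congr rfl fun j _ => ?_
      rw [hPj]
      rw [Polynomial.coe_sub, Polynomial.coe_pow, Polynomial.coe_add, Polynomial.coe_one,
        Polynomial.coe_X, Polynomial.coe_C]
      rfl
    have hmonQ : (∏ j ∈ J, Pj j).Monic := Polynomial.monic_prod_of_monic _ _ fun j _ => hmon j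
    have hdegQ : (∏ j ∈ J, Pj j).natDegree = d := by
      rw [Polynomial.natDegree_prod _ _ fun j _ => (hmon j).ne_zero]
      rw [hd]
      rw [Finset.sum_congr rfl fun j _ => hdegj j, Finset.sum_const, smul_eq_mul]
    rw [← hcoe, Polynomial.coeff_coe, ← hdegQ]
    exact hmonQ.coeff_natDegree
  -- A is at most d
  have hAle : A ≤ (J.card : ℤ) * (N : ℤ) := by
    have hQd := hQB d (by rw [hQtop]; exact one_ne_zero)
    unfold W at hQd
    rw [hQtop, Padic.valuation_one] at hQd
    calc A ≤ alpha p m * 0 + 1 * (d : ℤ) := hQd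
      _ = (d : ℤ) := by ring
      _ = (J.card : ℤ) * (N : ℤ) := by rw [hd]; push_cast; ring
  -- bounds at scale (α, p^(m-1))
  have hBddQM : Bdd p (alpha p m) ((p:ℤ)^(m-1)) ((J.card : ℤ) * (alpha p m * m)) Q := by
    have := bdd_prod (p := p) (α := alpha p m) (β := (p:ℤ)^(m-1)) hα0 J
      (fun j => omegaNJ p m j) (fun _ => alpha p m * m) (fun j _ => omega_bddM m hm j)
    simpa [Finset.sum_const, mul_comm] using this
  have hBddG2 : Bdd p (alpha p m) ((p:ℤ)^(m-1))
      (alpha p m * (CG - (h:ℤ) * ((m:ℤ) + h + 5))) G := by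
    intro i hi
    have h1 := hBddG1 i hi
    unfold W at h1 ⊢
    have h2 : (1:ℤ) * i ≤ (p:ℤ)^(m-1) * i :=
      mul_le_mul_of_nonneg_right hβ2 (Int.natCast_nonneg i)
    omega
  obtain ⟨B0, i0, hG2B, hG2k, hG2W, _⟩ := exists_min hGne hBddG2
  -- B ≤ B0
  have hBB0 : B ≤ B0 := by
    have h1 := hGB i0 hG2k
    have h2 : W p (alpha p m) 1 G i0 ≤ W p (alpha p m) ((p:ℤ)^(m-1)) G i0 := by
      unfold W
      have : (1:ℤ) * i0 ≤ (p:ℤ)^(m-1) * i0 :=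
        mul_le_mul_of_nonneg_right hβ2 (Int.natCast_nonneg i0)
      omega
    rw [hG2W] at h2
    omega
  -- bound B0 from the coefficient at istar
  have hB0le : B0 ≤ alpha p m * Dstar - ((h:ℤ)+1) * (alpha p m * m) := by
    have hbm := bdd_mul hα0 hBddQM hG2B istar (by rw [← hfQG]; exact histar)
    unfold W at hbm
    rw [← hfQG] at hbm
    have hle2 : (p:ℤ)^(m-1) * istar ≤ alpha p m * istar :=
      mul_le_mul_of_nonneg_right (AV7.pow_pred_le_alpha m) (Int.natCast_nonneg istar)
    rw [hDstar, ← hJcard]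
    have : alpha p m * ((PowerSeries.coeff (R := ℚ_[p]) istar f).valuation + (istar:ℤ))
        = alpha p m * (PowerSeries.coeff (R := ℚ_[p]) istar f).valuation + alpha p m * istar := by ring
    omega
  -- main step: attain_mul
  obtain ⟨hne1, hW1⟩ := attain_mul hα1 hQB hQk hQW hQleast hGB hGk hGW hGleast
  rw [← hfQG] at hne1 hW1
  have hlowf := hh_bdd hCf hm (k1 + i1) hne1
  rw [hW1] at hlowf
  -- p^m ≤ 2α
  have hpm2α : (N:ℤ) ≤ 2 * alpha p m := by
    have hcast : (N:ℤ) = (p:ℤ)^m := by rw [hN]; push_cast; ring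
    rw [hcast]
    exact AV7.pow_le_two_alpha m hm
  -- final contradiction
  have hfinal : alpha p m * (Cf - (h:ℤ) * ((m:ℤ) + h + 5))
      ≤ ((h:ℤ)+1) * (2 * alpha p m) + alpha p m * Dstar - ((h:ℤ)+1) * (alpha p m * m) := by
    have h1 : A + B ≤ ((h:ℤ)+1) * (N:ℤ) + B0 := by
      rw [← hJcard]
      omega
    have h2 : ((h:ℤ)+1) * (N:ℤ) ≤ ((h:ℤ)+1) * (2 * alpha p m) :=
      mul_le_mul_of_nonneg_left hpm2α (by positivity)
    omega
  have hbracket : alpha p m * ((m:ℤ) - M0) ≤ 0 := by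
    rw [hM0, hDstar]
    nlinarith [hfinal]
  have hpos : (1:ℤ) ≤ (m:ℤ) - M0 := by omega
  nlinarith [hbracket, hpos, hα1]
end
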